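/- Let Λ be a compact metric space, X a complete metric space, and S_λ(·,·), λ ∈ Λ, a family of processes on X such that each S_λ has a pullback attractor 𝒜_λ(·), and for every s ∈ ℝ and t ≥ s the map λ ↦ S_λ(t,s)x is continuous uniformly for x in bounded subsets of X. Assume (U3): there is a bounded set D₁ ⊆ X with 𝒜_λ(s) ⊆ D₁ for all s ∈ ℝ and λ ∈ Λ, and a function s_*(t) ≤ t such that S_λ(t,s)D₁ ⊆ D₁ for every s ≤ s_*(t) and every λ ∈ Λ. Fix t ∈ ℝ. If the map λ ↦ 𝒜_λ(t) is continuous on Λ (with respect to the Hausdorff metric), then lim_{s→−∞} sup_{λ∈Λ} ρ_X(S_λ(t,s)D₁, 𝒜_λ(t)) = 0, i.e. pullback equi-attraction holds at time t with absorbing set D₁. -/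

import Mathlib

open Filter Topology Metric Bornology

/-- A process on a metric space `X`: a two-parameter family `S t s : X → X` (`t ≥ s`)
with `S t t = id`, `S t τ ∘ S τ s = S t s` for `t ≥ τ ≥ s`, and `(t, s, x) ↦ S t s x`
continuous on the region `s ≤ t`. -/
def IsProcess {X : Type*} [MetricSpace X] (S : ℝ → ℝ → X → X) : Prop :=
  (∀ t : ℝ, S t t = id) ∧
  (∀ t τ s : ℝ, s ≤ τ → τ ≤ t → S t τ ∘ S τ s = S t s) ∧
  ContinuousOn (fun p : ℝ × ℝ × X => S p.1 p.2.1 p.2.2) {p : ℝ × ℝ × X | p.2.1 ≤ p.1}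

/-- The family `A(·)` is pullback attracting for the process `S`:
for every bounded `B` and every `t`, `ρ_X(S(t,s)B, A(t)) → 0` as `s → −∞`. -/
def PullbackAttracts {X : Type*} [MetricSpace X] (S : ℝ → ℝ → X → X) (A : ℝ → Set X) :
    Prop :=
  ∀ B : Set X, IsBounded B → ∀ t : ℝ, ∀ ε : ℝ, 0 < ε → ∃ s₀ : ℝ, ∀ s ≤ s₀, ∀ x ∈ B,
    EMetric.infEdist (S t s x) (A t) < ENNReal.ofReal ε

/-- A pullback attractor for the process `S`: a family of compact sets that is
invariant, pullback attracting, and minimal among such families. -/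
def IsPullbackAttractor {X : Type*} [MetricSpace X] (S : ℝ → ℝ → X → X)
    (A : ℝ → Set X) : Prop :=
  (∀ t : ℝ, IsCompact (A t)) ∧
  (∀ t s : ℝ, s ≤ t → S t s '' A s = A t) ∧
  PullbackAttracts S A ∧
  (∀ C : ℝ → Set X, (∀ t : ℝ, IsCompact (C t)) →
    (∀ t s : ℝ, s ≤ t → S t s '' C s = C t) → PullbackAttracts S C →
    ∀ t : ℝ, A t ⊆ C t)

/-- On a compact parameter space, under (U3), continuity of `λ ↦ 𝒜_λ(t)` in the
Hausdorff metric implies pullback equi-attraction at time `t` with absorbing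
set `D₁`. -/
theorem stmt14 {Λ X : Type*} [MetricSpace Λ] [CompactSpace Λ]
    [MetricSpace X] [CompleteSpace X]
    (S : Λ → ℝ → ℝ → X → X) (hproc : ∀ l : Λ, IsProcess (S l))
    -- (L1): pullback attractors
    (A : Λ → ℝ → Set X) (hA : ∀ l : Λ, IsPullbackAttractor (S l) (A l))
    -- (L3): continuity in `λ`, uniformly for `x` in bounded sets
    (hL3 : ∀ s t : ℝ, s ≤ t → ∀ B : Set X, IsBounded B → ∀ l₀ : Λ, ∀ ε : ℝ, 0 < ε →
      ∃ δ : ℝ, 0 < δ ∧ ∀ l : Λ, dist l l₀ < δ → ∀ x ∈ B,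
        dist (S l t s x) (S l₀ t s x) < ε)
    -- (U3): a common bounded uniformly positively invariant absorbing set `D₁`
    (D₁ : Set X) (hD₁ : IsBounded D₁) (hAD₁ : ∀ (l : Λ) (s : ℝ), A l s ⊆ D₁)
    (sStar : ℝ → ℝ) (hsStar : ∀ t : ℝ, sStar t ≤ t)
    (hinv : ∀ t : ℝ, ∀ s ≤ sStar t, ∀ l : Λ, S l t s '' D₁ ⊆ D₁)
    (t : ℝ)
    -- continuity of `λ ↦ 𝒜_λ(t)` on all of `Λ`
    (hcont : ∀ l₀ : Λ, ∀ ε : ℝ, 0 < ε → ∃ δ : ℝ, 0 < δ ∧ ∀ l : Λ, dist l l₀ < δ →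
      hausdorffDist (A l t) (A l₀ t) < ε) :
    -- pullback equi-attraction at time `t` with absorbing set `D₁`
    ∀ ε : ℝ, 0 < ε → ∃ s₀ : ℝ, ∀ s ≤ s₀, ∀ l : Λ, ∀ x ∈ D₁,
      EMetric.infEdist (S l t s x) (A l t) < ENNReal.ofReal ε := by

  intro ε hε
  -- trivial if D₁ is empty
  rcases D₁.eq_empty_or_nonempty with hD | ⟨x₀, hx₀⟩
  · exact ⟨0, fun s _ l x hx => absurd hx (by simp [hD])⟩
  -- all attractors at time t are nonempty
  have hne : ∀ l : Λ, (A l t).Nonempty := by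
    intro l
    obtain ⟨s₀, hs₀⟩ := (hA l).2.2.1 D₁ hD₁ t 1 one_pos
    have h := hs₀ s₀ le_rfl x₀ hx₀
    rcases (A l t).eq_empty_or_nonempty with h0 | h0
    · rw [h0] at h; change Metric.infEDist _ ∅ < _ at h; rw [Metric.infEDist_empty] at h
      exact absurd h (by simp)
    · exact h0
  have hε3 : 0 < ε / 3 := by positivity
  -- local version around each l₀
  have key : ∀ l₀ : Λ, ∃ δ : ℝ, 0 < δ ∧ ∃ σ : ℝ, ∀ s ≤ σ, ∀ l : Λ, dist l l₀ < δ →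
      ∀ x ∈ D₁, EMetric.infEdist (S l t s x) (A l t) < ENNReal.ofReal ε := by
    intro l₀
    obtain ⟨s₀, hs₀⟩ := (hA l₀).2.2.1 D₁ hD₁ t (ε / 3) hε3
    set s₁ := min s₀ (sStar t) with hs₁def
    have hs₁t : s₁ ≤ t := le_trans (min_le_right _ _) (hsStar t)
    obtain ⟨δ₁, hδ₁, hδ₁'⟩ := hL3 s₁ t hs₁t D₁ hD₁ l₀ (ε / 3) hε3
    obtain ⟨δ₂, hδ₂, hδ₂'⟩ := hcont l₀ (ε / 3) hε3
    refine ⟨min δ₁ δ₂, lt_min hδ₁ hδ₂, sStar s₁, ?_⟩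
    intro s hs l hl x hx
    set y := S l s₁ s x with hy
    have hyD : y ∈ D₁ := hinv s₁ s hs l ⟨x, hx, rfl⟩
    have hz : S l t s x = S l t s₁ y := by
      have := (hproc l).2.1 t s₁ s (le_trans hs (hsStar s₁)) hs₁t
      exact (congrFun this x).symm
    -- three estimates
    have h1 : edist (S l t s₁ y) (S l₀ t s₁ y) < ENNReal.ofReal (ε / 3) :=
      edist_lt_ofReal.mpr (hδ₁' l (lt_of_lt_of_le hl (min_le_left _ _)) y hyD)
    have h2 : EMetric.infEdist (S l₀ t s₁ y) (A l₀ t) < ENNReal.ofReal (ε / 3) :=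
      hs₀ s₁ (min_le_left _ _) y hyD
    have hfin : EMetric.hausdorffEdist (A l₀ t) (A l t) ≠ ⊤ :=
      Metric.hausdorffEdist_ne_top_of_nonempty_of_bounded (hne l₀) (hne l)
        ((hA l₀).1 t).isBounded ((hA l).1 t).isBounded
    have h3 : EMetric.hausdorffEdist (A l₀ t) (A l t) < ENNReal.ofReal (ε / 3) := by
      rw [ENNReal.lt_ofReal_iff_toReal_lt hfin]
      have := hδ₂' l (lt_of_lt_of_le hl (min_le_right _ _))
      rwa [Metric.hausdorffDist_comm] at this
    calc EMetric.infEdist (S l t s x) (A l t)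
        = EMetric.infEdist (S l t s₁ y) (A l t) := by rw [hz]
      _ ≤ EMetric.infEdist (S l t s₁ y) (A l₀ t)
            + EMetric.hausdorffEdist (A l₀ t) (A l t) :=
          EMetric.infEdist_le_infEdist_add_hausdorffEdist
      _ ≤ (edist (S l t s₁ y) (S l₀ t s₁ y) + EMetric.infEdist (S l₀ t s₁ y) (A l₀ t))
            + EMetric.hausdorffEdist (A l₀ t) (A l t) :=
          add_le_add EMetric.infEdist_le_edist_add_infEdist le_rfl
      _ < (ENNReal.ofReal (ε / 3) + ENNReal.ofReal (ε / 3)) + ENNReal.ofReal (ε / 3) :=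
          ENNReal.add_lt_add (ENNReal.add_lt_add h1 h2) h3
      _ = ENNReal.ofReal ε := by
          rw [← ENNReal.ofReal_add hε3.le hε3.le,
            ← ENNReal.ofReal_add (by positivity) hε3.le]
          congr 1; ring
  choose δ hδ σ hσ using key
  have hcover : (Set.univ : Set Λ) ⊆ ⋃ l₀ : Λ, Metric.ball l₀ (δ l₀) :=
    fun l _ => Set.mem_iUnion.mpr ⟨l, Metric.mem_ball_self (hδ l)⟩
  obtain ⟨F, hF⟩ := isCompact_univ.elim_finite_subcover _
    (fun l₀ : Λ => Metric.isOpen_ball) hcover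
  rcases F.eq_empty_or_nonempty with hFe | hFne
  · refine ⟨0, fun s _ l x _ => ?_⟩
    have := hF (Set.mem_univ l)
    simp [hFe] at this
  · refine ⟨F.inf' hFne σ, fun s hs l x hx => ?_⟩
    obtain ⟨l₀, hl₀F, hl₀⟩ := Set.mem_iUnion₂.mp (hF (Set.mem_univ l))
    exact hσ l₀ s (hs.trans (Finset.inf'_le _ hl₀F)) l (Metric.mem_ball.mp hl₀) x hx
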